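/- Let F(θ) = (1/n)Σ_{j=1}^n F_j(θ) with each ∇F_j L-Lipschitz, and sample a mini-batch J of size b < n uniformly without replacement. With G_J(θ̂) := (1/b)Σ_{j∈J} R∇F_j(θ̃) + R∇F(θ^(k)) − (1/b)Σ_{j∈J} R∇F_j(θ^(k)) and θ̃ := θ^(k) + P(θ̂ − Rθ^(k)), the estimator is unbiased, E_J[G_J(θ̂)] = R∇F(θ̃), and its variance satisfies E_J[‖G_J(θ̂) − R∇F(θ̃)‖²] ≤ (L²(n−b)/(b(n−1)))‖θ̂ − Rθ^(k)‖². -/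

import Mathlib

open RealInnerProductSpace Finset

open RealInnerProductSpace Finset

section
variable {n : ℕ} {M : Type*} [AddCommMonoid M]

lemma vrcg_swap_sum (N : Finset (Finset (Fin n))) (f : Fin n → M) :
    ∑ u ∈ N, ∑ j ∈ u, f j = ∑ j, (N.filter fun u => j ∈ u).card • f j := by
  have h1 : ∀ u : Finset (Fin n), ∑ j ∈ u, f j = ∑ j, if j ∈ u then f j else 0 := by
    intro u; rw [Finset.sum_ite_mem, Finset.univ_inter]
  simp_rw [h1]
  rw [Finset.sum_comm]
  refine Finset.sum_congr rfl fun j _ => ?_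
  rw [← Finset.sum_filter, Finset.sum_const]

lemma vrcg_swap_sum2 (N : Finset (Finset (Fin n))) (t : Fin n → Fin n → M) :
    ∑ u ∈ N, ∑ i ∈ u, ∑ j ∈ u, t i j
      = ∑ i, ∑ j, (N.filter fun u => i ∈ u ∧ j ∈ u).card • t i j := by
  have h1 : ∀ u : Finset (Fin n), ∑ i ∈ u, ∑ j ∈ u, t i j
      = ∑ i, ∑ j, if i ∈ u ∧ j ∈ u then t i j else 0 := by
    intro u
    rw [← Finset.sum_product']
    have h3 : (∑ i, ∑ j, if i ∈ u ∧ j ∈ u then t i j else 0)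
        = ∑ p : Fin n × Fin n, if p ∈ u ×ˢ u then t p.1 p.2 else 0 := by
      rw [← Finset.sum_product']
      exact Finset.sum_congr rfl fun p _ => by simp [Finset.mem_product]
    rw [h3, Finset.sum_ite_mem, Finset.univ_inter]
  simp_rw [h1]
  rw [Finset.sum_comm]
  refine Finset.sum_congr rfl fun i _ => ?_
  rw [Finset.sum_comm]
  refine Finset.sum_congr rfl fun j _ => ?_
  rw [← Finset.sum_filter, Finset.sum_const]

end

lemma card_filter_superset {α : Type*} [DecidableEq α] {s t : Finset α} (hts : t ⊆ s) {b : ℕ}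
    (htb : t.card ≤ b) :
    ((s.powersetCard b).filter fun u => t ⊆ u).card = (s.card - t.card).choose (b - t.card) := by
  rw [← Finset.card_sdiff_of_subset hts, ← Finset.card_powersetCard (b - t.card) (s \ t)]
  apply Finset.card_nbij' (fun u => u \ t) (fun v => v ∪ t)
  · intro u hu
    simp only [mem_coe, mem_filter, mem_powersetCard] at hu ⊢
    exact ⟨sdiff_subset_sdiff hu.1.1 le_rfl, by rw [Finset.card_sdiff_of_subset hu.2, hu.1.2]⟩
  · intro v hv
    replace hv := Finset.mem_powersetCard.1 hv
    have hdisj : Disjoint v t := Finset.sdiff_disjoint.mono_left hv.1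
    refine Finset.mem_filter.2 ⟨Finset.mem_powersetCard.2 ⟨Finset.union_subset (hv.1.trans sdiff_subset) hts, ?_⟩, Finset.subset_union_right⟩
    rw [Finset.card_union_of_disjoint hdisj, hv.2]
    omega
  · intro u hu
    simp only [coe_filter, Set.mem_setOf_eq, mem_coe, mem_filter] at hu
    exact Finset.sdiff_union_of_subset hu.2
  · intro v hv
    simp only [mem_coe, mem_powersetCard] at hv
    exact Finset.union_sdiff_cancel_right (Finset.sdiff_disjoint.mono_left hv.1)

lemma vrcg_count_one {n b : ℕ} (hb : 1 ≤ b) (j : Fin n) :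
    (((univ : Finset (Fin n)).powersetCard b).filter fun u => j ∈ u).card
      = (n - 1).choose (b - 1) := by
  have h := card_filter_superset (s := (univ : Finset (Fin n))) (t := {j})
    (Finset.singleton_subset_iff.2 (mem_univ j)) (b := b) (by simpa using hb)
  simpa [Finset.singleton_subset_iff, Finset.card_univ] using h

lemma vrcg_count_two {n b : ℕ} (hb : 2 ≤ b) {i j : Fin n} (hij : i ≠ j) :
    (((univ : Finset (Fin n)).powersetCard b).filter fun u => i ∈ u ∧ j ∈ u).card
      = (n - 2).choose (b - 2) := by
  have h := card_filter_superset (s := (univ : Finset (Fin n))) (t := {i, j})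
    (by simp) (b := b) (by rwa [Finset.card_pair hij])
  rw [Finset.card_pair hij, Finset.card_univ, Fintype.card_fin] at h
  rw [← h]
  congr 1
  ext u
  simp [Finset.insert_subset_iff]

lemma vrcg_count_two_one {n : ℕ} {i j : Fin n} (hij : i ≠ j) :
    (((univ : Finset (Fin n)).powersetCard 1).filter fun u => i ∈ u ∧ j ∈ u).card = 0 := by
  rw [Finset.card_eq_zero, Finset.filter_eq_empty_iff]
  rintro u hu ⟨hi, hj⟩
  rw [Finset.mem_powersetCard] at hu
  have := Finset.one_lt_card.2 ⟨i, hi, j, hj, hij⟩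
  omega

/-- for a mini-batch `Jb` of size `b < n` sampled uniformly without
replacement, the variance-reduced coarse gradient
`G_J(θ̂) := (1/b)Σ_{j∈J} R∇F_j(θ̃) + R∇F(θ^(k)) - (1/b)Σ_{j∈J} R∇F_j(θ^(k))` is unbiased,
`E_J[G_J(θ̂)] = R∇F(θ̃)`, with variance
`E_J[‖G_J(θ̂) - R∇F(θ̃)‖²] ≤ (L²(n-b)/(b(n-1)))‖θ̂ - Rθ^(k)‖²`. -/
theorem variance_reduced_coarse_gradient_minibatch {d D n b : ℕ}
    (hb : 0 < b) (hbn : b < n)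
    (L : ℝ) (hL : 0 ≤ L)
    (F : Fin n → EuclideanSpace ℝ (Fin d) → ℝ)
    (gF : Fin n → EuclideanSpace ℝ (Fin d) → EuclideanSpace ℝ (Fin d))
    (hgrad : ∀ j x, HasGradientAt (F j) (gF j x) x)
    (hlip : ∀ j x y, ‖gF j x - gF j y‖ ≤ L * ‖x - y‖)
    (ι : Fin D → Fin d) (hι : Function.Injective ι)
    (θk : EuclideanSpace ℝ (Fin d)) (θc : EuclideanSpace ℝ (Fin D)) :
    let Rop : EuclideanSpace ℝ (Fin d) → EuclideanSpace ℝ (Fin D) := fun x => WithLp.toLp 2 (fun i => x (ι i))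
    let Pop : EuclideanSpace ℝ (Fin D) → EuclideanSpace ℝ (Fin d) :=
      fun x => WithLp.toLp 2 (fun j => ∑ i, if ι i = j then x i else 0)
    let gradF : EuclideanSpace ℝ (Fin d) → EuclideanSpace ℝ (Fin d) :=
      fun x => (n : ℝ)⁻¹ • ∑ j, gF j x
    let θt := θk + Pop (θc - Rop θk)
    let GJ : Finset (Fin n) → EuclideanSpace ℝ (Fin D) :=
      fun Jb => ((b : ℝ)⁻¹ • ∑ j ∈ Jb, Rop (gF j θt)) + Rop (gradF θk)
        - (b : ℝ)⁻¹ • ∑ j ∈ Jb, Rop (gF j θk)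
    ((n.choose b : ℝ)⁻¹ • ∑ Jb ∈ Finset.univ.powersetCard b, GJ Jb = Rop (gradF θt)) ∧
      (n.choose b : ℝ)⁻¹ * ∑ Jb ∈ Finset.univ.powersetCard b, ‖GJ Jb - Rop (gradF θt)‖^2
        ≤ L^2 * ((n : ℝ) - b) / (b * ((n : ℝ) - 1)) * ‖θc - Rop θk‖^2 := by
  intro Rop Pop gradF θt GJ
  classical
  have hn2 : 2 ≤ n := lt_of_le_of_lt hb hbn
  have hnR : (0:ℝ) < n := by exact_mod_cast Nat.lt_of_lt_of_le Nat.zero_lt_one (le_trans hb hbn.le)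
  have hbR : (0:ℝ) < b := by exact_mod_cast hb
  have hn1R : (0:ℝ) < (n:ℝ) - 1 := by
    have : (1:ℝ) < n := by exact_mod_cast hn2
    linarith
  set N := (Finset.univ : Finset (Fin n)).powersetCard b with hN
  set c : ℝ := (n.choose b : ℝ) with hc
  have hcard : N.card = n.choose b := by
    rw [hN, Finset.card_powersetCard, Finset.card_univ, Fintype.card_fin]
  have hc0 : (0:ℝ) < c := by
    rw [hc]; exact_mod_cast Nat.choose_pos hbn.le
  -- linearity of Rop
  let RL : EuclideanSpace ℝ (Fin d) →ₗ[ℝ] EuclideanSpace ℝ (Fin D) :=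
    { toFun := Rop, map_add' := fun x y => rfl, map_smul' := fun r x => by ext i; simp [Rop] }
  have hRsub : ∀ x y, Rop (x - y) = Rop x - Rop y := fun x y => map_sub RL x y
  have hRsmul : ∀ (r : ℝ) x, Rop (r • x) = r • Rop x := fun r x => map_smul RL r x
  have hRsum : ∀ (s : Finset (Fin n)) (v : Fin n → EuclideanSpace ℝ (Fin d)),
      Rop (∑ j ∈ s, v j) = ∑ j ∈ s, Rop (v j) := fun s v => map_sum RL v s
  -- the per-summand vectors
  set X : Fin n → EuclideanSpace ℝ (Fin D) :=
    fun j => Rop (gF j θt) - Rop (gF j θk) with hX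
  set μ : EuclideanSpace ℝ (Fin D) := (n:ℝ)⁻¹ • ∑ j, X j with hμ
  have hRgrad : ∀ x, Rop (gradF x) = (n:ℝ)⁻¹ • ∑ j, Rop (gF j x) := by
    intro x
    rw [show gradF x = (n:ℝ)⁻¹ • ∑ j, gF j x from rfl, hRsmul, hRsum]
  have hμ' : Rop (gradF θt) = μ + Rop (gradF θk) := by
    rw [hRgrad θt, hRgrad θk, hμ]
    simp_rw [hX]
    rw [Finset.sum_sub_distrib, smul_sub]
    abel
  set Y : Fin n → EuclideanSpace ℝ (Fin D) := fun j => X j - μ with hY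
  have hsumX : ∑ j, X j = (n:ℝ) • μ := by
    rw [hμ, smul_smul, mul_inv_cancel₀ (ne_of_gt hnR), one_smul]
  have hsumY : ∑ j, Y j = 0 := by
    simp_rw [hY]
    rw [Finset.sum_sub_distrib, hsumX, Finset.sum_const, Finset.card_univ, Fintype.card_fin,
      ← Nat.cast_smul_eq_nsmul ℝ, sub_self]
  -- deviation formula
  have hdev : ∀ u ∈ N, GJ u - Rop (gradF θt) = (b:ℝ)⁻¹ • ∑ j ∈ u, Y j := by
    intro u hu
    have hucard : u.card = b := (Finset.mem_powersetCard.1 hu).2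
    have hGJ : GJ u = (b:ℝ)⁻¹ • ∑ j ∈ u, X j + Rop (gradF θk) := by
      rw [show GJ u = ((b : ℝ)⁻¹ • ∑ j ∈ u, Rop (gF j θt)) + Rop (gradF θk)
        - (b : ℝ)⁻¹ • ∑ j ∈ u, Rop (gF j θk) from rfl]
      simp_rw [hX]
      rw [Finset.sum_sub_distrib, smul_sub]
      abel
    have hYsum : ∑ j ∈ u, Y j = (∑ j ∈ u, X j) - (b:ℝ) • μ := by
      rw [Finset.sum_congr rfl (fun j _ => (rfl : Y j = X j - μ)), Finset.sum_sub_distrib,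
        Finset.sum_const, hucard, ← Nat.cast_smul_eq_nsmul ℝ]
    rw [hGJ, hμ', hYsum, smul_sub, smul_smul, inv_mul_cancel₀ (ne_of_gt hbR), one_smul]
    abel
  -- counting constants
  set c1 : ℝ := ((n - 1).choose (b - 1) : ℝ) with hc1def
  set c2 : ℝ := if 2 ≤ b then (((n - 2).choose (b - 2) : ℕ) : ℝ) else 0 with hc2def
  have hA : (n:ℝ) * c1 = (b:ℝ) * c := by
    have h := Nat.add_one_mul_choose_eq (n - 1) (b - 1)
    rw [Nat.sub_add_cancel (le_trans hb hbn.le),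
      Nat.sub_add_cancel hb] at h
    have h2 : n * (n - 1).choose (b - 1) = b * n.choose b := by rw [h, Nat.mul_comm]
    rw [hc1def, hc]
    exact_mod_cast h2
  have hB : ((n:ℝ) - 1) * c2 = ((b:ℝ) - 1) * c1 := by
    rcases lt_or_ge b 2 with h2 | h2
    · have hb1 : b = 1 := by omega
      rw [hc2def, if_neg (by omega)]
      simp [hb1]
    · rw [hc2def, if_pos h2]
      have hnat := Nat.add_one_mul_choose_eq (n - 2) (b - 2)
      rw [show n - 2 + 1 = n - 1 by omega,
        show b - 2 + 1 = b - 1 by omega] at hnat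
      have hcast : ((n:ℝ) - 1) = ((n - 1 : ℕ) : ℝ) := by
        rw [Nat.cast_sub (by omega)]; norm_num
      have hcastb : ((b:ℝ) - 1) = ((b - 1 : ℕ) : ℝ) := by
        rw [Nat.cast_sub (by omega)]; norm_num
      have hnat2 : (n - 1) * (n - 2).choose (b - 2) = (b - 1) * (n - 1).choose (b - 1) := by
        rw [hnat, Nat.mul_comm]
      rw [hcast, hcastb, hc1def]
      exact_mod_cast hnat2
  have hcount : ∀ i : Fin n, ((N.filter fun u => i ∈ u).card : ℝ) = c1 := by
    intro i
    rw [hN, vrcg_count_one hb, hc1def]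
  have hcount2 : ∀ i j : Fin n,
      ((N.filter fun u => i ∈ u ∧ j ∈ u).card : ℝ) = if i = j then c1 else c2 := by
    intro i j
    by_cases hij : i = j
    · subst hij
      rw [if_pos rfl, ← hcount i]
      congr 1
      simp only [and_self]
    · rw [if_neg hij]
      rcases lt_or_ge b 2 with h2 | h2
      · have hb1 : b = 1 := by omega
        rw [hc2def, if_neg (by omega), hN, hb1, vrcg_count_two_one hij, Nat.cast_zero]
      · rw [hc2def, if_pos h2, hN, vrcg_count_two h2 hij]
  -- Part 1: unbiasedness
  have hmean : c⁻¹ • ∑ u ∈ N, GJ u = Rop (gradF θt) := by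
    have h1 : ∑ u ∈ N, (GJ u - Rop (gradF θt)) = 0 := by
      rw [Finset.sum_congr rfl hdev, ← Finset.smul_sum, vrcg_swap_sum]
      have : ∀ j : Fin n, (N.filter fun u => j ∈ u).card • Y j
          = c1 • Y j := by
        intro j
        rw [← Nat.cast_smul_eq_nsmul ℝ, hcount j]
      simp_rw [this]
      rw [← Finset.smul_sum, hsumY, smul_zero, smul_zero]
    rw [Finset.sum_sub_distrib, Finset.sum_const, hcard, sub_eq_zero] at h1
    rw [h1, ← Nat.cast_smul_eq_nsmul ℝ, smul_smul, ← hc, inv_mul_cancel₀ (ne_of_gt hc0), one_smul]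
  refine ⟨hmean, ?_⟩
  -- Part 2: variance
  set w : ℝ := ‖θc - Rop θk‖ with hw
  have hw0 : 0 ≤ w := norm_nonneg _
  -- norm bounds for Rop and Pop
  have hRnorm : ∀ v : EuclideanSpace ℝ (Fin d), ‖Rop v‖ ≤ ‖v‖ := by
    intro v
    rw [EuclideanSpace.norm_eq, EuclideanSpace.norm_eq]
    apply Real.sqrt_le_sqrt
    calc ∑ i : Fin D, ‖(Rop v) i‖ ^ 2 = ∑ j ∈ Finset.univ.image ι, ‖v j‖ ^ 2 := by
          rw [Finset.sum_image (fun a _ b _ h => hι h)]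
      _ ≤ ∑ j : Fin d, ‖v j‖ ^ 2 :=
          Finset.sum_le_sum_of_subset_of_nonneg (Finset.subset_univ _)
            (fun _ _ _ => by positivity)
  have hPnorm : ∀ x : EuclideanSpace ℝ (Fin D), ‖Pop x‖ ≤ ‖x‖ := by
    intro x
    rw [EuclideanSpace.norm_eq, EuclideanSpace.norm_eq]
    apply Real.sqrt_le_sqrt
    have hval : ∀ i : Fin D, (Pop x) (ι i) = x i := by
      intro i
      show (∑ i', if ι i' = ι i then x i' else 0) = x i
      simp [hι.eq_iff]
    have hzero : ∀ j, j ∉ Finset.univ.image ι → (Pop x) j = 0 := by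
      intro j hj
      show (∑ i', if ι i' = j then x i' else 0) = 0
      apply Finset.sum_eq_zero
      intro i' _
      rw [if_neg]
      intro h
      exact hj (Finset.mem_image.2 ⟨i', Finset.mem_univ _, h⟩)
    have : ∑ j : Fin d, ‖(Pop x) j‖ ^ 2 = ∑ i : Fin D, ‖x i‖ ^ 2 := by
      rw [← Finset.sum_subset (Finset.subset_univ (Finset.univ.image ι))
        (fun j _ hj => by rw [hzero j hj]; simp),
        Finset.sum_image (fun a _ b _ h => hι h)]
      exact Finset.sum_congr rfl fun i _ => by rw [hval]
    exact le_of_eq this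
  -- bound on each X j
  have hXb : ∀ j, ‖X j‖ ≤ L * w := by
    intro j
    rw [hX]
    calc ‖Rop (gF j θt) - Rop (gF j θk)‖ = ‖Rop (gF j θt - gF j θk)‖ := by rw [hRsub]
      _ ≤ ‖gF j θt - gF j θk‖ := hRnorm _
      _ ≤ L * ‖θt - θk‖ := hlip j θt θk
      _ = L * ‖Pop (θc - Rop θk)‖ := by
          rw [show θt - θk = Pop (θc - Rop θk) from add_sub_cancel_left θk _]
      _ ≤ L * w := mul_le_mul_of_nonneg_left (hPnorm _) hL
  -- second moment bound
  have hSX : ∑ j, ‖Y j‖ ^ 2 ≤ (n:ℝ) * (L * w) ^ 2 := by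
    have hYX : ∑ j, ‖Y j‖ ^ 2 = (∑ j, ‖X j‖ ^ 2) - (n:ℝ) * ‖μ‖ ^ 2 := by
      have hinner : ∑ j, 2 * ⟪X j, μ⟫ = 2 * ((n:ℝ) * ‖μ‖ ^ 2) := by
        rw [← Finset.mul_sum, ← sum_inner, hsumX, real_inner_smul_left,
          real_inner_self_eq_norm_sq]
      simp_rw [hY, norm_sub_sq_real]
      rw [Finset.sum_add_distrib, Finset.sum_sub_distrib, hinner, Finset.sum_const,
        Finset.card_univ, Fintype.card_fin, nsmul_eq_mul]
      ring
    have hXS : ∑ j, ‖X j‖ ^ 2 ≤ (n:ℝ) * (L * w) ^ 2 := by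
      calc ∑ j, ‖X j‖ ^ 2 ≤ ∑ _j : Fin n, (L * w) ^ 2 :=
            Finset.sum_le_sum fun j _ => pow_le_pow_left₀ (norm_nonneg _) (hXb j) 2
        _ = (n:ℝ) * (L * w) ^ 2 := by
            rw [Finset.sum_const, Finset.card_univ, Fintype.card_fin, nsmul_eq_mul]
    have hμ0 : 0 ≤ (n:ℝ) * ‖μ‖ ^ 2 := by positivity
    linarith
  -- the key variance identity
  have hT : ∑ u ∈ N, ‖∑ j ∈ u, Y j‖ ^ 2 = (c1 - c2) * ∑ j, ‖Y j‖ ^ 2 := by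
    have hexp : ∀ u : Finset (Fin n), ‖∑ j ∈ u, Y j‖ ^ 2 = ∑ i ∈ u, ∑ j ∈ u, ⟪Y i, Y j⟫ := by
      intro u
      rw [← real_inner_self_eq_norm_sq, sum_inner]
      exact Finset.sum_congr rfl fun i _ => inner_sum u Y (Y i)
    simp_rw [hexp]
    rw [vrcg_swap_sum2]
    have hterm : ∀ i j : Fin n, (N.filter fun u => i ∈ u ∧ j ∈ u).card • ⟪Y i, Y j⟫
        = c2 * ⟪Y i, Y j⟫ + (if j = i then (c1 - c2) * ⟪Y i, Y j⟫ else 0) := by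
      intro i j
      rw [nsmul_eq_mul, hcount2 i j]
      by_cases hij : i = j
      · rw [if_pos hij, if_pos hij.symm]; ring
      · rw [if_neg hij, if_neg (Ne.symm hij)]; ring
    have hd : ∀ i : Fin n, (∑ j, if j = i then (c1 - c2) * ⟪Y i, Y j⟫ else 0)
        = (c1 - c2) * ‖Y i‖ ^ 2 := by
      intro i
      rw [Finset.sum_ite_eq' Finset.univ i fun j => (c1 - c2) * ⟪Y i, Y j⟫]
      rw [if_pos (Finset.mem_univ i), real_inner_self_eq_norm_sq]
    have hrow : ∀ i : Fin n, (∑ j, (N.filter fun u => i ∈ u ∧ j ∈ u).card • ⟪Y i, Y j⟫)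
        = (c1 - c2) * ‖Y i‖ ^ 2 := by
      intro i
      rw [Finset.sum_congr rfl fun j _ => hterm i j, Finset.sum_add_distrib,
        ← Finset.mul_sum, ← inner_sum, hsumY, inner_zero_right, mul_zero, zero_add, hd i]
    rw [Finset.sum_congr rfl fun i _ => hrow i, ← Finset.mul_sum]
  -- assemble
  set S : ℝ := ∑ j, ‖Y j‖ ^ 2 with hSdef
  have hGnorm : ∑ u ∈ N, ‖GJ u - Rop (gradF θt)‖ ^ 2 = ((b:ℝ)⁻¹) ^ 2 * ((c1 - c2) * S) := by
    rw [hSdef, ← hT, Finset.mul_sum]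
    refine Finset.sum_congr rfl fun u hu => ?_
    rw [hdev u hu, norm_smul, Real.norm_eq_abs, abs_of_pos (by positivity), mul_pow]
  have hc1v : c1 = (b:ℝ) * c / n := by
    rw [eq_div_iff (ne_of_gt hnR)]
    linear_combination hA
  have hc2v : c2 = (b:ℝ) * ((b:ℝ) - 1) * c / ((n:ℝ) * ((n:ℝ) - 1)) := by
    rw [eq_div_iff (by positivity)]
    have : c2 * ((n:ℝ) - 1) * n = ((b:ℝ) - 1) * c1 * n := by
      linear_combination (n:ℝ) * hB
    rw [mul_comm ((n:ℝ)) ((n:ℝ) - 1), ← mul_assoc, this]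
    linear_combination ((b:ℝ) - 1) * hA
  have hcoef : c⁻¹ * (((b:ℝ)⁻¹) ^ 2 * (c1 - c2)) = ((n:ℝ) - b) / ((b:ℝ) * (n:ℝ) * ((n:ℝ) - 1)) := by
    rw [hc1v, hc2v]
    field_simp
    ring
  have hnb : (0:ℝ) ≤ (n:ℝ) - (b:ℝ) := by
    have : (b:ℝ) ≤ (n:ℝ) := by exact_mod_cast hbn.le
    linarith
  have hS0 : 0 ≤ S := by
    rw [hSdef]
    exact Finset.sum_nonneg fun j _ => by positivity
  calc c⁻¹ * ∑ u ∈ N, ‖GJ u - Rop (gradF θt)‖ ^ 2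
      = ((n:ℝ) - b) / ((b:ℝ) * (n:ℝ) * ((n:ℝ) - 1)) * S := by
        rw [hGnorm, ← hcoef]; ring
    _ ≤ ((n:ℝ) - b) / ((b:ℝ) * (n:ℝ) * ((n:ℝ) - 1)) * ((n:ℝ) * (L * w) ^ 2) := by
        apply mul_le_mul_of_nonneg_left _ (div_nonneg hnb (by positivity))
        rw [hSdef]
        exact hSX
    _ = L ^ 2 * ((n:ℝ) - b) / ((b:ℝ) * ((n:ℝ) - 1)) * w ^ 2 := by
        field_simp
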